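/- Let $x_2 \in (-1,1)$ and $g(z) = \frac{\sqrt{1-4x_2^2 z^2(1-z^2)} - (1-2z^2)}{2z\sqrt{1-z^2}}$ for $z \in (0,1)$. Then $g$ is differentiable on $(0,1)$ and $g'(z) = g(z)\, h(z)$, where $h(z) = \frac{(1-4x_2^2 z^2(1-z^2))^{-1/2}}{z(1-z^2)}$. -/

import Mathlib

open Real Set

theorem deriv_g_eq_g_mul_h (x2 : ℝ) (hx2 : x2 ∈ Set.Ioo (-1 : ℝ) 1)
    (g h : ℝ → ℝ)
    (hg : ∀ z : ℝ, g z =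
      (Real.sqrt (1 - 4 * x2 ^ 2 * z ^ 2 * (1 - z ^ 2)) - (1 - 2 * z ^ 2)) /
        (2 * z * Real.sqrt (1 - z ^ 2)))
    (hh : ∀ z : ℝ, h z =
      (1 / Real.sqrt (1 - 4 * x2 ^ 2 * z ^ 2 * (1 - z ^ 2))) / (z * (1 - z ^ 2))) :
    ∀ z ∈ Set.Ioo (0 : ℝ) 1, HasDerivAt g (g z * h z) z := by
  intro z hz
  obtain ⟨hz0, hz1⟩ := hz
  have hu : (0:ℝ) < 1 - z^2 := by nlinarith
  have hQ : (0:ℝ) < 1 - 4 * x2 ^ 2 * z ^ 2 * (1 - z ^ 2) := by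
    nlinarith [sq_nonneg (x2*(2*z^2-1)),
      mul_pos (by linarith [hx2.1] : (0:ℝ) < 1 + x2) (by linarith [hx2.2] : (0:ℝ) < 1 - x2)]
  have ha : HasDerivAt (fun y:ℝ => 4*x2^2*y^2) (4*x2^2*(2*z)) z := by
    simpa using (hasDerivAt_pow 2 z).const_mul (4*x2^2)
  have hb : HasDerivAt (fun y:ℝ => 1 - y^2) (-(2*z)) z := by
    simpa using (hasDerivAt_pow 2 z).const_sub 1
  have hq : HasDerivAt (fun y:ℝ => 1 - 4*x2^2*y^2*(1-y^2))
      (-(4*x2^2*(2*z)*(1-z^2) + (4*x2^2*z^2)*(-(2*z)))) z := (ha.mul hb).const_sub 1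
  have hS := hq.sqrt hQ.ne'
  have hs := hb.sqrt hu.ne'
  have hc : HasDerivAt (fun y:ℝ => 1 - 2*y^2) (-(2*(2*z))) z := by
    simpa using ((hasDerivAt_pow 2 z).const_mul 2).const_sub 1
  have hn := hS.sub hc
  have h2y : HasDerivAt (fun y:ℝ => 2*y) 2 z := by
    simpa using (hasDerivAt_id z).const_mul 2
  have hd := h2y.mul hs
  have hdne : 2*z*Real.sqrt (1 - z^2) ≠ 0 := by positivity
  have hder := hn.div hd hdne
  have hgf : g = fun y => (Real.sqrt (1 - 4 * x2 ^ 2 * y ^ 2 * (1 - y ^ 2)) - (1 - 2 * y ^ 2)) /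
        (2 * y * Real.sqrt (1 - y ^ 2)) := funext hg
  rw [hgf]
  refine hder.congr_deriv ?_
  symm
  rw [hh]
  simp only [Pi.mul_apply, Pi.sub_apply]
  show ((Real.sqrt (1 - 4 * x2 ^ 2 * z ^ 2 * (1 - z ^ 2)) - (1 - 2 * z ^ 2)) / (2 * z * Real.sqrt (1 - z ^ 2))) * (1 / Real.sqrt (1 - 4 * x2 ^ 2 * z ^ 2 * (1 - z ^ 2)) / (z * (1 - z ^ 2))) = _
  set S := Real.sqrt (1 - 4 * x2 ^ 2 * z ^ 2 * (1 - z ^ 2)) with hSdef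
  set s := Real.sqrt (1 - z ^ 2) with hsdef
  have hSpos : 0 < S := Real.sqrt_pos.2 hQ
  have hspos : 0 < s := Real.sqrt_pos.2 hu
  have hS2 : S^2 = 1 - 4 * x2 ^ 2 * z ^ 2 * (1 - z ^ 2) := Real.sq_sqrt hQ.le
  have hs2 : s^2 = 1 - z^2 := Real.sq_sqrt hu.le
  rw [show (1:ℝ) - z^2 = s^2 from hs2.symm] at hS2 ⊢
  field_simp
  ring_nf
  linear_combination (s^2 - z^2) * hS2 + (1 - 4*S*z^2 - S*(1 - 2*z^2)) * hs2
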